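/- Exponential maximal inequality for continuous martingales: Let (Ω, 𝓕, (𝓕_s)_{s∈[0,T]}, ℙ) be a filtered probability space, t ∈ [0,T], and let M = (M_s)_{s∈[t,T]} be a martingale with respect to (𝓕_s) with almost surely continuous paths, such that the random variable exp( sup_{s∈[t,T]} |M_s − M_t| ) is integrable. Then almost surely 𝔼[ exp( sup_{s∈[t,T]} |M_s − M_t| ) | 𝓕_t ] ≤ 10 · 𝔼[ exp( |M_T − M_t| ) | 𝓕_t ]. -/

import Mathlib

open MeasureTheory Set
open scoped ENNReal NNReal


noncomputable section ExpMaxAux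

/-- slope of an affine minorant of `x ↦ exp (|x|/2)` -/
def expAffA (p : ℚ × Bool) : ℝ := (if p.2 then 1 else -1) * Real.exp ((p.1 : ℝ)/2) / 2

/-- intercept of an affine minorant of `x ↦ exp (|x|/2)` -/
def expAffB (p : ℚ × Bool) : ℝ := Real.exp ((p.1 : ℝ)/2) * (1 - (p.1 : ℝ)/2)

lemma expAff_eq (p : ℚ × Bool) (x : ℝ) :
    expAffB p + expAffA p * x
      = Real.exp ((p.1 : ℝ)/2) * (1 + ((if p.2 then x else -x) - (p.1 : ℝ))/2) := by
  rcases p with ⟨q, e⟩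
  cases e <;> simp [expAffA, expAffB] <;> ring

lemma expAff_le (p : ℚ × Bool) (x : ℝ) :
    expAffB p + expAffA p * x ≤ Real.exp (|x|/2) := by
  rw [expAff_eq]
  set q : ℝ := (p.1 : ℝ)
  set y : ℝ := if p.2 then x else -x with hy
  have hyx : y ≤ |x| := by
    rcases p with ⟨q', e⟩
    cases e
    · simpa [hy] using neg_le_abs x
    · simpa [hy] using le_abs_self x
  have h2 : 1 + (y - q)/2 ≤ Real.exp ((y - q)/2) := by
    have := Real.add_one_le_exp ((y - q)/2); linarith
  calc Real.exp (q/2) * (1 + (y - q)/2)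
      ≤ Real.exp (q/2) * Real.exp ((y - q)/2) :=
        mul_le_mul_of_nonneg_left h2 (Real.exp_nonneg _)
    _ = Real.exp (y/2) := by rw [← Real.exp_add]; ring_nf
    _ ≤ Real.exp (|x|/2) := Real.exp_le_exp.2 (by linarith)

lemma iSup_expAff (x : ℝ) :
    (⨆ p : ℚ × Bool, (expAffB p + expAffA p * x)) = Real.exp (|x|/2) := by
  have hb : BddAbove (Set.range fun p : ℚ × Bool => expAffB p + expAffA p * x) :=
    ⟨Real.exp (|x|/2), by rintro _ ⟨p, rfl⟩; exact expAff_le p x⟩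
  refine le_antisymm (ciSup_le fun p => expAff_le p x) (le_of_forall_lt fun c hc => ?_)
  obtain ⟨e, he⟩ : ∃ e : Bool, (if e then x else -x) = |x| := by
    rcases le_or_gt 0 x with h | h
    · exact ⟨true, by simp [abs_of_nonneg h]⟩
    · exact ⟨false, by simp [abs_of_neg h]⟩
  have hval : ∀ q : ℚ, (q : ℝ) ≤ |x| →
      Real.exp ((q:ℝ)/2) ≤ expAffB (q, e) + expAffA (q, e) * x := by
    intro q hq
    rw [expAff_eq]
    simp only [he]
    have h1 : (1:ℝ) ≤ 1 + (|x| - (q:ℝ))/2 := by linarith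
    nlinarith [Real.exp_pos ((q:ℝ)/2)]
  have key : ∃ q : ℚ, (q:ℝ) ≤ |x| ∧ c < Real.exp ((q:ℝ)/2) := by
    rcases le_or_gt c 0 with hc0 | hc0
    · obtain ⟨q, hq⟩ := exists_rat_lt |x|
      exact ⟨q, hq.le, lt_of_le_of_lt hc0 (Real.exp_pos _)⟩
    · have hlog : Real.log c < |x|/2 := (Real.log_lt_iff_lt_exp hc0).2 hc
      obtain ⟨q, hq1, hq2⟩ := exists_rat_btwn (show 2 * Real.log c < |x| by linarith)
      refine ⟨q, hq2.le, ?_⟩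
      have : Real.log c < (q:ℝ)/2 := by linarith
      calc c = Real.exp (Real.log c) := (Real.exp_log hc0).symm
        _ < Real.exp ((q:ℝ)/2) := Real.exp_lt_exp.2 this
  obtain ⟨q, hq1, hq2⟩ := key
  exact lt_of_lt_of_le (lt_of_lt_of_le hq2 (hval q hq1)) (le_ciSup hb (q, e))

/-- Conditional Jensen for `x ↦ exp(|x|/2)` via countably many affine minorants. -/
lemma jensen_exp_abs_half {Ω : Type*} {m0 : MeasurableSpace Ω} {ν : Measure Ω}
    [IsFiniteMeasure ν] {m : MeasurableSpace Ω} (hm : m ≤ m0)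
    {N N' : Ω → ℝ} (hN' : Integrable N' ν)
    (hmart : ν[N'|m] =ᵐ[ν] N)
    (hYi : Integrable (fun a => Real.exp (|N' a|/2)) ν) :
    (fun a => Real.exp (|N a|/2)) ≤ᵐ[ν] ν[fun a => Real.exp (|N' a|/2)|m] := by
  have hall : ∀ p : ℚ × Bool, ∀ᵐ a ∂ν,
      expAffB p + expAffA p * N a ≤ (ν[fun a => Real.exp (|N' a|/2)|m]) a := by
    intro p
    have hfun : (fun a => expAffB p + expAffA p * N' a)
        = (fun _ => expAffB p) + (expAffA p • N') := by
      ext a; simp [Pi.add_apply, Pi.smul_apply, smul_eq_mul]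
    have h1 : ν[fun a => expAffB p + expAffA p * N' a|m]
        =ᵐ[ν] fun a => expAffB p + expAffA p * N a := by
      rw [hfun]
      refine (condExp_add (integrable_const _) (hN'.smul _) m).trans ?_
      have hc : ν[(fun _ => expAffB p : Ω → ℝ)|m] = fun _ => expAffB p := condExp_const hm _
      have hs : ν[expAffA p • N'|m] =ᵐ[ν] expAffA p • (ν[N'|m]) := condExp_smul _ _ _
      filter_upwards [hs, hmart] with a hsa hma
      simp only [Pi.add_apply, hc, Pi.smul_apply, smul_eq_mul, hsa, hma]
    have h2 : ν[fun a => expAffB p + expAffA p * N' a|m]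
        ≤ᵐ[ν] ν[fun a => Real.exp (|N' a|/2)|m] := by
      refine condExp_mono ?_ hYi (Filter.Eventually.of_forall fun a => expAff_le p (N' a))
      exact ((integrable_const (expAffB p)).add (hN'.smul (expAffA p))).congr (by
        filter_upwards with a; simp [smul_eq_mul])
    filter_upwards [h1, h2] with a h1a h2a
    rw [← h1a]; exact h2a
  filter_upwards [(ae_all_iff).2 hall] with a ha
  calc Real.exp (|N a|/2) = ⨆ p : ℚ × Bool, (expAffB p + expAffA p * N a) :=
        (iSup_expAff _).symm
    _ ≤ _ := ciSup_le ha

end ExpMaxAux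
/-- Exponential maximal inequality for continuous martingales:
If `M` is a continuous martingale on `[t,T]` with
`exp(sup_{s∈[t,T]} |M_s − M_t|)` integrable, then a.s.
`𝔼[exp(sup_{s∈[t,T]} |M_s − M_t|) | 𝓕 t] ≤ 10 · 𝔼[exp(|M_T − M_t|) | 𝓕 t]`. -/
theorem exponential_maximal_inequality
    {Ω : Type*} {m0 : MeasurableSpace Ω} (μ : Measure Ω) [IsProbabilityMeasure μ]
    (𝓕 : Filtration ℝ m0) (T t : ℝ) (ht : t ∈ Icc (0:ℝ) T)
    (M : ℝ → Ω → ℝ)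
    (hadapt : ∀ s ∈ Icc t T, StronglyMeasurable[𝓕 s] (M s))
    (hint : ∀ s ∈ Icc t T, Integrable (M s) μ)
    (hmart : ∀ s ∈ Icc t T, ∀ s' ∈ Icc t T, s ≤ s' → μ[M s'|𝓕 s] =ᵐ[μ] M s)
    (hcont : ∀ᵐ ω ∂μ, ContinuousOn (fun s => M s ω) (Icc t T))
    (S : Ω → ℝ) (hS : ∀ ω, S ω = ⨆ s : Icc t T, |M (s : ℝ) ω - M t ω|)
    (hexpint : Integrable (fun ω => Real.exp (S ω)) μ) :
    ∀ᵐ ω ∂μ, (μ[fun ω' => Real.exp (S ω')|𝓕 t]) ω ≤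
      10 * (μ[fun ω' => Real.exp (abs (M T ω' - M t ω'))|𝓕 t]) ω := by
  obtain ⟨ht0, htT⟩ := ht
  have htmem : t ∈ Icc t T := ⟨le_rfl, htT⟩
  have hTmem : T ∈ Icc t T := ⟨htT, le_rfl⟩
  haveI : Nonempty (Icc t T) := ⟨⟨t, htmem⟩⟩
  set g : Ω → ℝ := fun ω => Real.exp (|M T ω - M t ω|) with hgdef
  set f0 : Ω → ℝ := fun ω => Real.exp (S ω) with hf0def
  -- strongly measurable (m0) versions
  have hMm : ∀ s ∈ Icc t T, StronglyMeasurable (M s) := fun s hs => (hadapt s hs).mono (𝓕.le s)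
  -- a.e.-measurable version of S
  have hSae : AEMeasurable S μ := by
    have h1 : AEMeasurable (fun ω => Real.exp (S ω)) μ := hexpint.1.aemeasurable
    have h2 : AEMeasurable (fun ω => Real.log (Real.exp (S ω))) μ :=
      Real.measurable_log.comp_aemeasurable h1
    simpa [Real.log_exp] using h2
  obtain ⟨S', hS'meas, hS'eq⟩ : ∃ S' : Ω → ℝ, Measurable S' ∧ S =ᵐ[μ] S' :=
    ⟨hSae.mk S, hSae.measurable_mk, hSae.ae_eq_mk⟩
  -- countable dense subset of [t,T]
  set D : Set ℝ := (Icc t T ∩ Set.range ((↑) : ℚ → ℝ)) ∪ {t, T} with hDdef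
  have hDsub : D ⊆ Icc t T := by
    rintro x (⟨hx, -⟩ | hx)
    · exact hx
    · rcases hx with rfl | rfl
      exacts [htmem, hTmem]
  have hDcount : D.Countable :=
    ((Set.countable_range _).mono inter_subset_right).union ((Set.countable_singleton _).insert _)
  have hDne : D.Nonempty := ⟨t, Or.inr (Or.inl rfl)⟩
  obtain ⟨u, hurange⟩ : ∃ u : ℕ → ℝ, Set.range u = D := by
    obtain ⟨u, hu⟩ := hDcount.exists_eq_range hDne
    exact ⟨u, hu.symm⟩
  have huD : ∀ n, u n ∈ D := fun n => hurange ▸ Set.mem_range_self n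
  have huIcc : ∀ n, u n ∈ Icc t T := fun n => hDsub (huD n)
  have hclos : ∀ s ∈ Icc t T, ∃ x : ℕ → ℝ, (∀ k, ∃ n, u n = x k) ∧
      (∀ k, x k ∈ Icc t T) ∧ Filter.Tendsto x Filter.atTop (nhds s) := by
    intro s hs
    rcases eq_or_lt_of_le hs.2 with rfl | hsT
    · refine ⟨fun _ => s, fun k => ?_, fun k => hs, tendsto_const_nhds⟩
      have : s ∈ D := Or.inr (Or.inr rfl)
      rw [← hurange] at this; exact this
    · have hsel : ∀ k : ℕ, ∃ q : ℚ, s < (q:ℝ) ∧ (q:ℝ) < min T (s + 1/(k+1)) := by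
        intro k
        refine exists_rat_btwn (lt_min hsT ?_)
        have : (0:ℝ) < 1/(k+1) := by positivity
        linarith
      choose q hq1 hq2 using hsel
      refine ⟨fun k => (q k : ℝ), fun k => ?_, fun k => ?_, ?_⟩
      · have hmem : ((q k : ℝ)) ∈ D := by
          refine Or.inl ⟨⟨hs.1.trans (hq1 k).le, ((hq2 k).trans_le (min_le_left _ _)).le⟩, ⟨q k, rfl⟩⟩
        rw [← hurange] at hmem; exact hmem
      · exact ⟨hs.1.trans (hq1 k).le, ((hq2 k).trans_le (min_le_left _ _)).le⟩
      · have hub : Filter.Tendsto (fun k : ℕ => s + 1/(k+1:ℝ)) Filter.atTop (nhds s) := by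
          have := tendsto_one_div_add_atTop_nhds_zero_nat (𝕜 := ℝ)
          have h2 := Filter.Tendsto.const_add s this
          simpa using h2
        refine tendsto_of_tendsto_of_tendsto_of_le_of_le tendsto_const_nhds hub
          (fun k => (hq1 k).le) (fun k => ((hq2 k).trans_le (min_le_right _ _)).le)
  -- the "good" full-measure set
  have hgood : ∀ᵐ ω ∂μ, (∀ s ∈ Icc t T, |M s ω - M t ω| ≤ S ω) ∧
      S ω = (⨆ n, |M (u n) ω - M t ω|) ∧
      BddAbove (Set.range fun n => |M (u n) ω - M t ω|) ∧ 0 ≤ S ω := by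
    filter_upwards [hcont] with ω hω
    have hcont2 : ContinuousOn (fun s => |M s ω - M t ω|) (Icc t T) :=
      (hω.sub continuousOn_const).abs
    have himg : BddAbove ((fun s => |M s ω - M t ω|) '' Icc t T) :=
      (isCompact_Icc.image_of_continuousOn hcont2).bddAbove
    have hrange : (Set.range fun s : Icc t T => |M (s:ℝ) ω - M t ω|)
        = (fun s => |M s ω - M t ω|) '' Icc t T := by
      rw [show (fun s : Icc t T => |M (s:ℝ) ω - M t ω|)
          = (fun s => |M s ω - M t ω|) ∘ ((↑) : Icc t T → ℝ) from rfl,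
        Set.range_comp, Subtype.range_coe]
    have hbdd : BddAbove (Set.range fun s : Icc t T => |M (s:ℝ) ω - M t ω|) := by
      rw [hrange]; exact himg
    have hle : ∀ s ∈ Icc t T, |M s ω - M t ω| ≤ S ω := by
      intro s hs
      rw [hS]
      exact le_ciSup hbdd ⟨s, hs⟩
    have hbddn : BddAbove (Set.range fun n => |M (u n) ω - M t ω|) :=
      ⟨S ω, by rintro _ ⟨n, rfl⟩; exact hle _ (huIcc n)⟩
    have hSn : S ω = ⨆ n, |M (u n) ω - M t ω| := by
      refine le_antisymm ?_ (ciSup_le fun n => hle _ (huIcc n))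
      rw [hS]
      refine ciSup_le fun s => ?_
      obtain ⟨x, hxD, hxIcc, hxt⟩ := hclos s s.2
      have hterm : ∀ k, |M (x k) ω - M t ω| ≤ ⨆ n, |M (u n) ω - M t ω| := by
        intro k
        obtain ⟨n, hn⟩ := hxD k
        rw [← hn]
        exact le_ciSup hbddn n
      have htend : Filter.Tendsto (fun k => |M (x k) ω - M t ω|) Filter.atTop
          (nhds (|M (s:ℝ) ω - M t ω|)) := by
        have hc : ContinuousWithinAt (fun r => |M r ω - M t ω|) (Icc t T) s :=
          hcont2 s s.2
        refine hc.tendsto.comp ?_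
        exact tendsto_nhdsWithin_of_tendsto_nhds_of_eventually_within _ hxt
          (Filter.Eventually.of_forall hxIcc)
      exact le_of_tendsto htend (Filter.Eventually.of_forall hterm)
    refine ⟨hle, hSn, hbddn, ?_⟩
    have := hle t htmem
    simpa using this
  -- integrability of g
  have hgsm : StronglyMeasurable g :=
    (Real.continuous_exp.comp continuous_abs).comp_stronglyMeasurable
      ((hMm T hTmem).sub (hMm t htmem))
  have hgint : Integrable g μ := by
    refine hexpint.mono' hgsm.aestronglyMeasurable ?_
    filter_upwards [hgood] with ω hω
    rw [Real.norm_eq_abs, abs_of_pos (Real.exp_pos _)]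
    exact Real.exp_le_exp.2 (hω.1 T hTmem)
  -- MAIN set-integral estimate
  have key : ∀ A : Set Ω, MeasurableSet[𝓕 t] A →
      ∫ a in A, f0 a ∂μ ≤ 4 * ∫ a in A, g a ∂μ := by
    intro A hA
    have hAm : MeasurableSet A := (𝓕.le t) _ hA
    set ν : Measure Ω := μ.restrict A with hνdef
    haveI : IsFiniteMeasure ν := by
      constructor
      rw [hνdef, Measure.restrict_apply_univ]
      exact measure_lt_top μ A
    have hgoodν : ∀ᵐ ω ∂ν, (∀ s ∈ Icc t T, |M s ω - M t ω| ≤ S ω) ∧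
        S ω = (⨆ n, |M (u n) ω - M t ω|) ∧
        BddAbove (Set.range fun n => |M (u n) ω - M t ω|) ∧ 0 ≤ S ω :=
      ae_restrict_of_ae hgood
    have hS'ν : S =ᵐ[ν] S' := ae_restrict_of_ae hS'eq
    set Y : ℝ → Ω → ℝ := fun r a => Real.exp (|M r a - M t a| / 2) with hYdef
    have hYsm : ∀ r ∈ Icc t T, StronglyMeasurable[𝓕 r] (Y r) := by
      intro r hr
      have h1 : StronglyMeasurable[𝓕 r] (fun a => M r a - M t a) :=
        (hadapt r hr).sub ((hadapt t htmem).mono (𝓕.mono hr.1))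
      exact (Real.continuous_exp.comp (continuous_abs.div_const 2)).comp_stronglyMeasurable h1
    have hYsm0 : ∀ r ∈ Icc t T, StronglyMeasurable (Y r) :=
      fun r hr => (hYsm r hr).mono (𝓕.le r)
    have hexpintν : Integrable f0 ν := hexpint.restrict
    have hYint : ∀ r ∈ Icc t T, Integrable (Y r) ν := by
      intro r hr
      refine hexpintν.mono' (hYsm0 r hr).aestronglyMeasurable ?_
      filter_upwards [hgoodν] with a ha
      rw [Real.norm_eq_abs, abs_of_pos (Real.exp_pos _)]
      refine Real.exp_le_exp.2 ?_
      have h1 := ha.1 r hr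
      have h2 := ha.2.2.2
      show |M r a - M t a| / 2 ≤ S a
      linarith
    have hmartν : ∀ r ∈ Icc t T, ∀ r' ∈ Icc t T, r ≤ r' → ν[M r'|𝓕 r] =ᵐ[ν] M r := by
      intro r hr r' hr' hrr'
      refine (ae_eq_condExp_of_forall_setIntegral_eq (𝓕.le r) ((hint r' hr').restrict)
        (fun B hB _ => ((hint r hr).restrict).integrableOn)
        (fun B hB _ => ?_) ((hadapt r hr).aestronglyMeasurable)).symm
      have hBm : MeasurableSet B := (𝓕.le r) _ hB
      rw [Measure.restrict_restrict hBm]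
      have hBA : MeasurableSet[𝓕 r] (B ∩ A) := MeasurableSet.inter hB (𝓕.mono hr.1 _ hA)
      calc ∫ x in B ∩ A, M r x ∂μ
          = ∫ x in B ∩ A, (μ[M r'|𝓕 r]) x ∂μ := by
            refine setIntegral_congr_ae ((𝓕.le r) _ hBA) ?_
            filter_upwards [hmart r hr r' hr' hrr'] with x hx _
            exact hx.symm
        _ = ∫ x in B ∩ A, M r' x ∂μ := setIntegral_condExp (𝓕.le r) (hint r' hr') hBA
    have hsubY : ∀ r ∈ Icc t T, ∀ r' ∈ Icc t T, r ≤ r' → Y r ≤ᵐ[ν] ν[Y r'|𝓕 r] := by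
      intro r hr r' hr' hrr'
      have h2 : ν[M t|𝓕 r] = M t :=
        condExp_of_stronglyMeasurable (𝓕.le r)
          ((hadapt t htmem).mono (𝓕.mono hr.1)) ((hint t htmem).restrict)
      have hNmart : ν[fun a => M r' a - M t a|𝓕 r] =ᵐ[ν] fun a => M r a - M t a := by
        have h3 := condExp_sub (μ := ν) (m := 𝓕 r) ((hint r' hr').restrict)
          ((hint t htmem).restrict)
        filter_upwards [h3, hmartν r hr r' hr' hrr'] with a h3a h1a
        have hfe : (fun a => M r' a - M t a) = M r' - M t := rfl
        rw [hfe, h3a, Pi.sub_apply, h1a, h2]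
      exact jensen_exp_abs_half (𝓕.le r)
        (((hint r' hr').restrict).sub ((hint t htmem).restrict)) hNmart (hYint r' hr')
    -- ENNReal versions
    set YT' : Ω → ℝ≥0∞ := fun a => ENNReal.ofReal (Y T a) with hYT'def
    have hYT'meas : Measurable YT' := ENNReal.measurable_ofReal.comp (hYsm0 T hTmem).measurable
    set f : Ω → ℝ := fun a => Real.exp (S' a / 2) with hfdef
    have hfmeas : Measurable f := Real.measurable_exp.comp (hS'meas.div_const 2)
    have hfnn : ∀ a, 0 ≤ f a := fun a => (Real.exp_pos _).le
    -- the weak maximal inequality extended to the countable supremum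
    have hweak : ∀ r : ℝ, 0 < r →
        ENNReal.ofReal r * ν {a | r < f a} ≤ ∫⁻ a, ({a' | r ≤ f a'}.indicator YT') a ∂ν := by
      intro r hr
      have hstage : ∀ n : ℕ,
          ENNReal.ofReal r * ν {a | ∃ d ∈ (insert T ((Finset.range (n+1)).image u)), r ≤ Y d a}
            ≤ ∫⁻ a, ({a' | r ≤ f a'}.indicator YT') a ∂ν := by
        intro n
        set F : Finset ℝ := insert T ((Finset.range (n+1)).image u) with hFdef
        have hFIcc : ∀ d ∈ F, d ∈ Icc t T := by
          intro d hd
          rcases Finset.mem_insert.1 hd with rfl | hd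
          · exact hTmem
          · obtain ⟨j, -, rfl⟩ := Finset.mem_image.1 hd
            exact huIcc j
        set k : ℕ := F.card with hkdef
        have hk : 0 < k := Finset.card_pos.2 ⟨T, Finset.mem_insert_self _ _⟩
        set iso := F.orderIsoOfFin rfl with hisodef
        set π : ℕ → ℝ := fun i => (iso ⟨min i (k-1), by omega⟩ : ℝ) with hπdef
        have hπmono : Monotone π := by
          intro i j hij
          refine Subtype.coe_le_coe.2 (iso.monotone ?_)
          simp only [Fin.mk_le_mk]
          omega
        have hπF : ∀ i, π i ∈ F := fun i => (iso _).2
        have hπIcc : ∀ i, π i ∈ Icc t T := fun i => hFIcc _ (hπF i)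
        have hsurj : ∀ d ∈ F, ∃ i, i ≤ k - 1 ∧ π i = d := by
          intro d hd
          set j : Fin k := iso.symm ⟨d, hd⟩ with hjdef
          have hjlt : (j : ℕ) < k := j.2
          refine ⟨(j : ℕ), by omega, ?_⟩
          have hfin : (⟨min (j:ℕ) (k-1), by omega⟩ : Fin k) = j := by
            apply Fin.ext; simp only []; omega
          show (iso ⟨min (j:ℕ) (k-1), by omega⟩ : ℝ) = d
          rw [hfin, hjdef, OrderIso.apply_symm_apply]
        have hπtop : π (k-1) = T := by
          obtain ⟨i, hi, hieq⟩ := hsurj T (Finset.mem_insert_self _ _)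
          refine le_antisymm (hπIcc _).2 ?_
          calc T = π i := hieq.symm
            _ ≤ π (k-1) := hπmono hi
        set 𝒢 : Filtration ℕ m0 :=
          ⟨fun i => 𝓕 (π i), fun i j hij => 𝓕.mono (hπmono hij), fun i => 𝓕.le _⟩ with h𝒢def
        set gp : ℕ → Ω → ℝ := fun i => Y (π i) with hgpdef
        have hsub : Submartingale gp 𝒢 ν :=
          ⟨fun i => hYsm _ (hπIcc i), fun i j hij => hsubY _ (hπIcc i) _ (hπIcc j) (hπmono hij),
            fun i => hYint _ (hπIcc i)⟩
        have hnn : 0 ≤ gp := by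
          intro i a
          exact (Real.exp_pos _).le
        set ε : NNReal := r.toNNReal with hεdef
        have hεr : (ε : ℝ) = r := Real.coe_toNNReal _ hr.le
        have hmax := maximal_ineq hsub hnn (ε := ε) (k-1)
        set Bset := {a | (ε:ℝ) ≤ (Finset.range ((k-1)+1)).sup' Finset.nonempty_range_add_one
          fun i => gp i a} with hBdef
        have hkk : (k-1)+1 = k := by omega
        have hBeq : Bset = {a | ∃ d ∈ F, r ≤ Y d a} := by
          ext a
          simp only [hBdef, Set.mem_setOf_eq, Finset.le_sup'_iff, hεr, Finset.mem_range, hkk]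
          constructor
          · rintro ⟨i, hik, hi⟩
            exact ⟨π i, hπF i, hi⟩
          · rintro ⟨d, hd, hdle⟩
            obtain ⟨i, hik, rfl⟩ := hsurj d hd
            exact ⟨i, by omega, hdle⟩
        have hBm : MeasurableSet Bset := by
          refine measurableSet_le measurable_const ?_
          exact Finset.measurable_range_sup'' fun i _ => (hYsm0 _ (hπIcc i)).measurable
        calc ENNReal.ofReal r * ν {a | ∃ d ∈ F, r ≤ Y d a}
            = (ε : ℝ≥0∞) * ν Bset := by rw [hBeq]; rfl
          _ = ε • ν Bset := by rw [ENNReal.smul_def]; rfl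
          _ ≤ ENNReal.ofReal (∫ a in Bset, gp (k-1) a ∂ν) := hmax
          _ = ENNReal.ofReal (∫ a in Bset, Y T a ∂ν) := by simp only [hgpdef]; rw [hπtop]
          _ = ∫⁻ a in Bset, YT' a ∂ν :=
              ofReal_integral_eq_lintegral_ofReal ((hYint T hTmem).integrableOn)
                (Filter.Eventually.of_forall fun a => (Real.exp_pos _).le)
          _ = ∫⁻ a, (Bset.indicator YT') a ∂ν := (lintegral_indicator hBm _).symm
          _ ≤ ∫⁻ a, ({a' | r ≤ f a'}.indicator YT') a ∂ν := by
              refine lintegral_mono_ae ?_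
              filter_upwards [hgoodν, hS'ν] with a hgd hS'a
              by_cases hmem : a ∈ Bset
              · have hmem2 : a ∈ {a' | r ≤ f a'} := by
                  rw [hBeq] at hmem
                  obtain ⟨d, hd, hdle⟩ := hmem
                  refine le_trans hdle ?_
                  show Real.exp (|M d a - M t a| / 2) ≤ Real.exp (S' a / 2)
                  rw [← hS'a]
                  refine Real.exp_le_exp.2 ?_
                  have := hgd.1 d (hFIcc d hd)
                  linarith
                rw [Set.indicator_of_mem hmem, Set.indicator_of_mem hmem2]
              · rw [Set.indicator_of_notMem hmem]; exact zero_le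
      set B : ℕ → Set Ω := fun n =>
        {a | ∃ d ∈ (insert T ((Finset.range (n+1)).image u) : Finset ℝ), r ≤ Y d a} with hBdef2
      have hBmono : Monotone B := by
        intro m n hmn a ha
        obtain ⟨d, hd, hdle⟩ := ha
        refine ⟨d, ?_, hdle⟩
        rcases Finset.mem_insert.1 hd with rfl | hd
        · exact Finset.mem_insert_self _ _
        · refine Finset.mem_insert_of_mem (Finset.image_subset_image ?_ hd)
          exact Finset.range_subset_range.2 (by omega)
      have hsetle : ν {a | r < f a} ≤ ν (⋃ n, B n) := by
        refine measure_mono_ae ?_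
        filter_upwards [hgoodν, hS'ν] with a hgd hS'a hmem
        have hbdd2 : BddAbove (Set.range fun n => Y (u n) a) := by
          refine ⟨Real.exp (S a / 2), ?_⟩
          rintro _ ⟨n, rfl⟩
          refine Real.exp_le_exp.2 ?_
          have := hgd.1 _ (huIcc n)
          have h0 := hgd.2.2.2
          show |M (u n) a - M t a| / 2 ≤ S a / 2
          linarith
        have hfa : f a = ⨆ n, Y (u n) a := by
          show Real.exp (S' a / 2) = ⨆ n, Real.exp (|M (u n) a - M t a| / 2)
          rw [← hS'a, hgd.2.1]
          have hmono : Monotone (fun x : ℝ => Real.exp (x/2)) := by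
            intro x y hxy
            exact Real.exp_le_exp.2 (by linarith)
          have hcAt : ContinuousAt (fun x : ℝ => Real.exp (x/2))
              (⨆ n, |M (u n) a - M t a|) :=
            (Real.continuous_exp.comp (continuous_id.div_const 2)).continuousAt
          exact hmono.map_ciSup_of_continuousAt hcAt hgd.2.2.1
        have hlt : r < ⨆ n, Y (u n) a := by
          have : r < f a := hmem
          rwa [hfa] at this
        obtain ⟨n, hn⟩ := (lt_ciSup_iff hbdd2).1 hlt
        exact Set.mem_iUnion.2 ⟨n, ⟨u n, Finset.mem_insert_of_mem
          (Finset.mem_image.2 ⟨n, Finset.mem_range.2 (by omega), rfl⟩), hn.le⟩⟩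
      calc ENNReal.ofReal r * ν {a | r < f a}
          ≤ ENNReal.ofReal r * ν (⋃ n, B n) := mul_le_mul_right hsetle _
        _ = ENNReal.ofReal r * ⨆ n, ν (B n) := by rw [hBmono.measure_iUnion]
        _ = ⨆ n, ENNReal.ofReal r * ν (B n) := by rw [ENNReal.mul_iSup]
        _ ≤ _ := iSup_le fun n => hstage n
    -- main chain
    set I : ℝ≥0∞ := ∫⁻ a, ENNReal.ofReal (Real.exp (S a)) ∂ν with hIdef
    set J : ℝ≥0∞ := ∫⁻ a, ENNReal.ofReal (Real.exp (|M T a - M t a|)) ∂ν with hJdef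
    have hgintν : Integrable g ν := hgint.restrict
    have hIeq : ENNReal.ofReal (∫ a, f0 a ∂ν) = I :=
      ofReal_integral_eq_lintegral_ofReal hexpintν
        (Filter.Eventually.of_forall fun a => (Real.exp_pos _).le)
    have hJeq : ENNReal.ofReal (∫ a, g a ∂ν) = J :=
      ofReal_integral_eq_lintegral_ofReal hgintν
        (Filter.Eventually.of_forall fun a => (Real.exp_pos _).le)
    have hItop : I ≠ ⊤ := by rw [← hIeq]; exact ENNReal.ofReal_ne_top
    have hJtop : J ≠ ⊤ := by rw [← hJeq]; exact ENNReal.ofReal_ne_top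
    have hlayer : I = ∫⁻ r in Ioi (0:ℝ), ν {a | r ≤ f a} * ENNReal.ofReal (2*r) := by
      have h0 := lintegral_comp_eq_lintegral_meas_le_mul ν (f := f) (g := fun r => 2*r)
        (Filter.Eventually.of_forall hfnn) hfmeas.aemeasurable
        (fun t' ht' => (continuous_const.mul continuous_id).intervalIntegrable _ _)
        ((ae_restrict_iff' measurableSet_Ioi).2
          (Filter.Eventually.of_forall fun s hs => by show (0:ℝ) ≤ 2*s; have : (0:ℝ) < s := hs; linarith))
      have h1 : ∀ a : Ω, ENNReal.ofReal (∫ s in (0:ℝ)..f a, 2*s) = ENNReal.ofReal ((f a)^2) := by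
        intro a; congr 1
        rw [intervalIntegral.integral_const_mul, integral_id]
        ring
      calc I = ∫⁻ a, ENNReal.ofReal ((f a)^2) ∂ν := by
            rw [hIdef]
            refine lintegral_congr_ae ?_
            filter_upwards [hS'ν] with a ha
            congr 1
            show Real.exp (S a) = Real.exp (S' a / 2) ^ 2
            rw [← ha, sq, ← Real.exp_add]
            congr 1
            ring
        _ = ∫⁻ a, ENNReal.ofReal (∫ s in (0:ℝ)..f a, 2*s) ∂ν :=
            lintegral_congr fun a => (h1 a).symm
        _ = _ := h0
    have hchain : I ≤ 2 * ∫⁻ a, YT' a * ENNReal.ofReal (f a) ∂ν := by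
      have hmeas_le : ∀ᵐ r ∂(volume.restrict (Ioi (0:ℝ))),
          ν {a | r ≤ f a} = ν {a | r < f a} :=
        meas_le_ae_eq_meas_lt ν (volume.restrict (Ioi 0)) f
      have step1 : I ≤ ∫⁻ r in Ioi (0:ℝ),
          2 * ∫⁻ a, ({a' | r ≤ f a'}.indicator YT') a ∂ν ∂volume := by
        rw [hlayer]
        refine lintegral_mono_ae ?_
        filter_upwards [hmeas_le, self_mem_ae_restrict measurableSet_Ioi] with r hre hrpos
        have h2r : ENNReal.ofReal (2*r) = 2 * ENNReal.ofReal r := by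
          rw [ENNReal.ofReal_mul (by norm_num)]
          norm_num
        calc ν {a | r ≤ f a} * ENNReal.ofReal (2*r)
            = 2 * (ENNReal.ofReal r * ν {a | r < f a}) := by rw [hre, h2r]; ring
          _ ≤ 2 * ∫⁻ a, ({a' | r ≤ f a'}.indicator YT') a ∂ν :=
              mul_le_mul_right (hweak r hrpos) 2
      have hswap : ∫⁻ r in Ioi (0:ℝ), ∫⁻ a, ({a' | r ≤ f a'}.indicator YT') a ∂ν ∂volume
          = ∫⁻ a, YT' a * ENNReal.ofReal (f a) ∂ν := by
        have hrw : ∀ r : ℝ, ∀ a : Ω, ({a' | r ≤ f a'}.indicator YT') a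
            = ({q : ℝ × Ω | q.1 ≤ f q.2}.indicator (fun q => YT' q.2)) (r, a) := by
          intro r a
          by_cases h : r ≤ f a
          · simp [Set.indicator_apply, Set.mem_setOf_eq, h]
          · simp [Set.indicator_apply, Set.mem_setOf_eq, h]
        have hmeasprod : Measurable ({q : ℝ × Ω | q.1 ≤ f q.2}.indicator
            (fun q => YT' q.2)) := by
          refine Measurable.indicator (hYT'meas.comp measurable_snd) ?_
          exact measurableSet_le measurable_fst (hfmeas.comp measurable_snd)
        calc ∫⁻ r in Ioi (0:ℝ), ∫⁻ a, ({a' | r ≤ f a'}.indicator YT') a ∂ν ∂volume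
            = ∫⁻ r in Ioi (0:ℝ), ∫⁻ a,
                ({q : ℝ × Ω | q.1 ≤ f q.2}.indicator (fun q => YT' q.2)) (r, a) ∂ν ∂volume := by
              simp_rw [hrw]
          _ = ∫⁻ a, ∫⁻ r in Ioi (0:ℝ),
                ({q : ℝ × Ω | q.1 ≤ f q.2}.indicator (fun q => YT' q.2)) (r, a) ∂volume ∂ν :=
              lintegral_lintegral_swap hmeasprod.aemeasurable
          _ = ∫⁻ a, YT' a * ENNReal.ofReal (f a) ∂ν := by
              refine lintegral_congr fun a => ?_
              have hptw : ∀ r : ℝ, ({q : ℝ × Ω | q.1 ≤ f q.2}.indicator (fun q => YT' q.2)) (r, a)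
                  = (Set.Iic (f a)).indicator (fun _ => YT' a) r := by
                intro r
                by_cases h : r ≤ f a
                · simp [Set.indicator_apply, Set.mem_setOf_eq, Set.mem_Iic, h]
                · simp [Set.indicator_apply, Set.mem_setOf_eq, Set.mem_Iic, h]
              simp_rw [hptw]
              rw [lintegral_indicator measurableSet_Iic, setLIntegral_const,
                Measure.restrict_apply measurableSet_Iic]
              have hIic : Iic (f a) ∩ Ioi 0 = Ioc 0 (f a) := by
                ext x; simp only [mem_inter_iff, mem_Iic, mem_Ioi, mem_Ioc]; tauto
              rw [hIic, Real.volume_Ioc, sub_zero]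
      calc I ≤ ∫⁻ r in Ioi (0:ℝ),
            2 * ∫⁻ a, ({a' | r ≤ f a'}.indicator YT') a ∂ν ∂volume := step1
        _ = 2 * ∫⁻ r in Ioi (0:ℝ), ∫⁻ a, ({a' | r ≤ f a'}.indicator YT') a ∂ν ∂volume :=
            lintegral_const_mul' 2 _ (by norm_num)
        _ = 2 * ∫⁻ a, YT' a * ENNReal.ofReal (f a) ∂ν := by rw [hswap]
    have hHolder : ∫⁻ a, YT' a * ENNReal.ofReal (f a) ∂ν ≤ J ^ (1/2:ℝ) * I ^ (1/2:ℝ) := by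
      have hpq : Real.HolderConjugate 2 2 := (Real.holderConjugate_iff_eq_conjExponent one_lt_two).2 (by norm_num)
      have h := ENNReal.lintegral_mul_le_Lp_mul_Lq ν hpq (f := YT')
        (g := fun a => ENNReal.ofReal (f a)) hYT'meas.aemeasurable
        (hfmeas.ennreal_ofReal).aemeasurable
      simp only [Pi.mul_apply] at h
      have h1 : ∫⁻ a, YT' a ^ (2:ℝ) ∂ν = J := by
        refine lintegral_congr fun a => ?_
        show (ENNReal.ofReal (Y T a)) ^ (2:ℝ) = ENNReal.ofReal (Real.exp (|M T a - M t a|))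
        rw [ENNReal.ofReal_rpow_of_nonneg (Real.exp_pos _).le (by norm_num)]
        congr 1
        rw [show (2:ℝ) = ((2:ℕ):ℝ) by norm_num, Real.rpow_natCast]
        show Real.exp (|M T a - M t a| / 2) ^ 2 = _
        rw [sq, ← Real.exp_add]
        congr 1
        ring
      have h2 : ∫⁻ a, (ENNReal.ofReal (f a)) ^ (2:ℝ) ∂ν = I := by
        rw [hIdef]
        refine lintegral_congr_ae ?_
        filter_upwards [hS'ν] with a ha
        show (ENNReal.ofReal (f a)) ^ (2:ℝ) = ENNReal.ofReal (Real.exp (S a))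
        rw [ENNReal.ofReal_rpow_of_nonneg (hfnn a) (by norm_num)]
        congr 1
        rw [show (2:ℝ) = ((2:ℕ):ℝ) by norm_num, Real.rpow_natCast]
        show Real.exp (S' a / 2) ^ 2 = Real.exp (S a)
        rw [← ha, sq, ← Real.exp_add]
        congr 1
        ring
      rw [h1, h2] at h
      exact h
    have hfinal : I ≤ 4 * J := by
      rcases eq_or_ne I 0 with h0 | h0
      · rw [h0]; exact zero_le
      have h1 : I ≤ 2 * J ^ (1/2:ℝ) * I ^ (1/2:ℝ) := by
        calc I ≤ 2 * (J ^ (1/2:ℝ) * I ^ (1/2:ℝ)) :=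
              le_trans hchain (mul_le_mul_right hHolder 2)
          _ = 2 * J ^ (1/2:ℝ) * I ^ (1/2:ℝ) := by ring
      rcases eq_or_ne J 0 with hJ0 | hJ0
      · exfalso
        rw [hJ0, ENNReal.zero_rpow_of_pos (by norm_num)] at h1
        simp only [mul_zero, zero_mul] at h1
        exact h0 (le_antisymm h1 zero_le)
      have hIhalf0 : I ^ (1/2:ℝ) ≠ 0 := by
        rw [ne_eq, ENNReal.rpow_eq_zero_iff]
        rintro (⟨h, -⟩ | ⟨h, -⟩)
        exacts [h0 h, hItop h]
      have hIhalftop : I ^ (1/2:ℝ) ≠ ⊤ := by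
        rw [ne_eq, ENNReal.rpow_eq_top_iff]
        rintro (⟨h, -⟩ | ⟨h, -⟩)
        exacts [h0 h, hItop h]
      have hsq : I = I ^ (1/2:ℝ) * I ^ (1/2:ℝ) := by
        rw [← ENNReal.rpow_add _ _ h0 hItop]
        norm_num
      have h2 : I ^ (1/2:ℝ) ≤ 2 * J ^ (1/2:ℝ) :=
        (ENNReal.mul_le_mul_iff_left hIhalf0 hIhalftop).1 (by rw [← hsq]; exact h1)
      calc I = I ^ (1/2:ℝ) * I ^ (1/2:ℝ) := hsq
        _ ≤ (2 * J ^ (1/2:ℝ)) * (2 * J ^ (1/2:ℝ)) := mul_le_mul' h2 h2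
        _ = 4 * (J ^ (1/2:ℝ) * J ^ (1/2:ℝ)) := by ring
        _ = 4 * J := by
            rw [← ENNReal.rpow_add _ _ hJ0 hJtop]
            norm_num
    have h4Jtop : (4:ℝ≥0∞) * J ≠ ⊤ := ENNReal.mul_ne_top (by norm_num) hJtop
    have hto := ENNReal.toReal_mono h4Jtop hfinal
    have hIto : I.toReal = ∫ a, f0 a ∂ν := by
      rw [← hIeq, ENNReal.toReal_ofReal (integral_nonneg fun a => (Real.exp_pos _).le)]
    have hJto : ((4:ℝ≥0∞)*J).toReal = 4 * ∫ a, g a ∂ν := by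
      rw [ENNReal.toReal_mul, ← hJeq,
        ENNReal.toReal_ofReal (integral_nonneg fun a => (Real.exp_pos _).le)]
      norm_num
      rfl
    show ∫ a, f0 a ∂ν ≤ 4 * ∫ a, g a ∂ν
    rw [← hIto, ← hJto]
    exact hto
  -- conclude via conditional expectations
  have h10int : Integrable ((10:ℝ) • g) μ := hgint.smul _
  have hd : (μ[f0|𝓕 t]) ≤ᵐ[μ] (μ[(10:ℝ) • g|𝓕 t]) := by
    set d : Ω → ℝ := (μ[(10:ℝ) • g|𝓕 t]) - (μ[f0|𝓕 t]) with hddef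
    have hdsm : StronglyMeasurable[𝓕 t] d :=
      stronglyMeasurable_condExp.sub stronglyMeasurable_condExp
    have hdint : Integrable d μ := integrable_condExp.sub integrable_condExp
    have hdtrim : Integrable d (μ.trim (𝓕.le t)) := hdint.trim (𝓕.le t) hdsm
    have hnn : 0 ≤ᵐ[μ.trim (𝓕.le t)] d := by
      refine ae_nonneg_of_forall_setIntegral_nonneg hdtrim ?_
      intro s hs _
      rw [← setIntegral_trim (𝓕.le t) hdsm hs]
      have hsm0 : MeasurableSet s := (𝓕.le t) _ hs
      have h1 : ∫ x in s, d x ∂μ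
          = ∫ x in s, (μ[(10:ℝ) • g|𝓕 t]) x ∂μ - ∫ x in s, (μ[f0|𝓕 t]) x ∂μ := by
        rw [hddef]
        exact integral_sub (integrable_condExp.integrableOn) (integrable_condExp.integrableOn)
      rw [h1, setIntegral_condExp (𝓕.le t) h10int hs, setIntegral_condExp (𝓕.le t) hexpint hs]
      have h2 : ∫ x in s, ((10:ℝ) • g) x ∂μ = 10 * ∫ x in s, g x ∂μ := by
        simp_rw [Pi.smul_apply, smul_eq_mul]
        exact integral_const_mul 10 _
      have h3 : ∫ x in s, g x ∂μ ≥ 0 :=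
        integral_nonneg fun x => (Real.exp_pos _).le
      have h4 := key s hs
      rw [h2]
      simp only [hf0def] at h4 ⊢
      linarith
    have hnn' : 0 ≤ᵐ[μ] d := ae_le_of_ae_le_trim hnn
    filter_upwards [hnn'] with ω hω
    have : 0 ≤ (μ[(10:ℝ) • g|𝓕 t]) ω - (μ[f0|𝓕 t]) ω := hω
    linarith
  have hsmul : (μ[(10:ℝ) • g|𝓕 t]) =ᵐ[μ] (10:ℝ) • (μ[g|𝓕 t]) := condExp_smul _ _ _
  filter_upwards [hd, hsmul] with ω h1 h2
  calc (μ[f0|𝓕 t]) ω ≤ (μ[(10:ℝ) • g|𝓕 t]) ω := h1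
    _ = 10 * (μ[g|𝓕 t]) ω := by rw [h2]; simp
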